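/- For every finite simple graph G on n vertices and all integers q, q' with 0 ≤ q ≤ q' ≤ n, one has Z_+(G) = Z_0(G), Z_q(G) ≤ Z_{q'}(G), and Z_n(G) = Z(G). -/

import Mathlib

namespace ZqForcing

variable {V : Type*}

/-- `u` forces `v` within the allowed vertex set `A`, given the filled set `F`:
`u` is filled, `v` is its unique unfilled neighbor inside `A`. -/
def forceIn (G : SimpleGraph V) (A F : Set V) (u v : V) : Prop :=
  u ∈ A ∧ v ∈ A ∧ u ∈ F ∧ v ∉ F ∧ G.Adj u v ∧
    ∀ w ∈ A, G.Adj u w → w ∉ F → w = v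

/-- One step of the standard zero forcing color change rule. -/
def zfStep (G : SimpleGraph V) (F F' : Set V) : Prop :=
  ∃ u v, forceIn G Set.univ F u v ∧ F' = insert v F

/-- `S` is a zero forcing set: repeated color changes fill all of `V`. -/
def IsZeroForcingSet (G : SimpleGraph V) (S : Set V) : Prop :=
  Relation.ReflTransGen (zfStep G) S Set.univ

/-- The zero forcing number `Z(G)`. -/
noncomputable def zeroForcingNumber (G : SimpleGraph V) : ℕ :=
  sInf {n | ∃ S : Set V, S.ncard = n ∧ IsZeroForcingSet G S}

/-- Reachability in `G - F`, i.e. through vertices avoiding `F`. -/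
def reachAvoid (G : SimpleGraph V) (F : Set V) : V → V → Prop :=
  Relation.ReflTransGen (fun a b => G.Adj a b ∧ a ∉ F ∧ b ∉ F)

/-- The positive semidefinite color change rule: filled `u` forces unfilled `v` when `v`
is the unique neighbor of `u` in the connected component of `G - F` containing `v`. -/
def psdForce (G : SimpleGraph V) (F : Set V) (u v : V) : Prop :=
  u ∈ F ∧ v ∉ F ∧ G.Adj u v ∧
    ∀ w, G.Adj u w → w ∉ F → reachAvoid G F v w → w = v

/-- One step of the positive semidefinite color change rule. -/
def psdStep (G : SimpleGraph V) (F F' : Set V) : Prop :=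
  ∃ u v, psdForce G F u v ∧ F' = insert v F

/-- `S` is a positive semidefinite zero forcing set. -/
def IsPSDForcingSet (G : SimpleGraph V) (S : Set V) : Prop :=
  Relation.ReflTransGen (psdStep G) S Set.univ

/-- The positive semidefinite zero forcing number `Z₊(G)`. -/
noncomputable def psdZeroForcingNumber (G : SimpleGraph V) : ℕ :=
  sInf {n | ∃ S : Set V, S.ncard = n ∧ IsPSDForcingSet G S}

/-- The vertex sets of the connected components of the subgraph induced on
the unfilled vertices. -/
def unfilledComponents (G : SimpleGraph V) (F : Set V) : Set (Set V) :=
  {C | ∃ v, v ∉ F ∧ C = {w | reachAvoid G F v w}}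

/-- A forcing step performed inside the induced subgraph on the vertex set `A`. -/
def rule3Step (G : SimpleGraph V) (A F F' : Set V) : Prop :=
  ∃ u v, forceIn G A F u v ∧ F' = insert v F

/-- `ZqWinFrom G q F t`: starting from the filled set `F`, the player can guarantee to
fill all vertices using at most `t` further tokens against every oracle strategy, in the
`q`-analogue zero forcing game. -/
inductive ZqWinFrom (G : SimpleGraph V) (q : ℕ) : Set V → ℕ → Prop
  | done (t : ℕ) : ZqWinFrom G q Set.univ t
  | rule1 {F : Set V} {t : ℕ} (v : V) (hv : v ∉ F)
      (h : ZqWinFrom G q (insert v F) t) : ZqWinFrom G q F (t + 1)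
  | rule2 {F : Set V} {t : ℕ} (u v : V) (huv : forceIn G Set.univ F u v)
      (h : ZqWinFrom G q (insert v F) t) : ZqWinFrom G q F t
  | rule3 {F : Set V} {t : ℕ} (𝒞 : Set (Set V))
      (h𝒞 : 𝒞 ⊆ unfilledComponents G F) (hcard : q + 1 ≤ 𝒞.ncard)
      (next : ∀ 𝒮 : Set (Set V), 𝒮 ⊆ 𝒞 → 𝒮.Nonempty → Set V)
      (hnext : ∀ (𝒮 : Set (Set V)) (h1 : 𝒮 ⊆ 𝒞) (h2 : 𝒮.Nonempty),
        Relation.ReflTransGen (rule3Step G (F ∪ ⋃₀ 𝒮)) F (next 𝒮 h1 h2))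
      (h : ∀ (𝒮 : Set (Set V)) (h1 : 𝒮 ⊆ 𝒞) (h2 : 𝒮.Nonempty),
        ZqWinFrom G q (next 𝒮 h1 h2) t) :
      ZqWinFrom G q F t

/-- The `q`-analogue zero forcing number `Z_q(G)`. -/
noncomputable def qZeroForcingNumber (G : SimpleGraph V) (q : ℕ) : ℕ :=
  sInf {t | ZqWinFrom G q ∅ t}

/-- The induced subgraph on `B` is connected and has no cut vertex. -/
def NoCutVertex (G : SimpleGraph V) (B : Set V) : Prop :=
  (G.induce B).Connected ∧
    ∀ v ∈ B, (B \ {v}).Nonempty → (G.induce (B \ {v})).Connected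

/-- `B` is a block of `G`: a maximal (vertex set of a) connected subgraph without
a cut vertex. -/
def IsBlock (G : SimpleGraph V) (B : Set V) : Prop :=
  NoCutVertex G B ∧ ∀ B' : Set V, B ⊆ B' → NoCutVertex G B' → B' = B

/-- A block graph: a connected graph each of whose blocks is a clique. -/
def IsBlockGraph (G : SimpleGraph V) : Prop :=
  G.Connected ∧ ∀ B : Set V, IsBlock G B → G.IsClique B

/-- A cactus graph: connected, and every edge lies on at most one cycle
(cycles being identified when they have the same edge set). -/
def IsCactus (G : SimpleGraph V) : Prop :=
  G.Connected ∧ ∀ (a b : V) (c : G.Walk a a) (d : G.Walk b b),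
    c.IsCycle → d.IsCycle → ∀ e ∈ c.edges, e ∈ d.edges →
      ∀ e', e' ∈ c.edges ↔ e' ∈ d.edges

/-- `c` is an induced (chordless) cycle of `G`. -/
def IsInducedCycle (G : SimpleGraph V) {v : V} (c : G.Walk v v) : Prop :=
  c.IsCycle ∧ ∀ x ∈ c.support, ∀ y ∈ c.support, G.Adj x y → s(x, y) ∈ c.edges

/-- Generalized windmill graph of Type I: η disjoint copies of `K_k` together with
`l` central vertices forming a clique, each central vertex adjacent to everything. -/
def windmillI (η k l : ℕ) : SimpleGraph ((Fin η × Fin k) ⊕ Fin l) :=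
  SimpleGraph.fromRel (fun a b =>
    match a, b with
    | Sum.inl (i, _), Sum.inl (i', _) => i = i'
    | Sum.inr _, Sum.inr _ => True
    | _, _ => True)

/-- Generalized windmill graph of Type II: η disjoint copies of `K_k` together with
`l` pairwise nonadjacent central vertices, each adjacent to every clique vertex. -/
def windmillII (η k l : ℕ) : SimpleGraph ((Fin η × Fin k) ⊕ Fin l) :=
  SimpleGraph.fromRel (fun a b =>
    match a, b with
    | Sum.inl (i, _), Sum.inl (i', _) => i = i'
    | Sum.inr _, Sum.inr _ => False
    | _, _ => True)

/-- Generalized star (spider) graph: a center `none` together with `k` disjoint paths,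
the `i`-th of length `m i`, attached to the center at one endpoint. -/
def spider {k : ℕ} (m : Fin k → ℕ) : SimpleGraph (Option (Σ i : Fin k, Fin (m i))) :=
  SimpleGraph.fromRel (fun a b =>
    match a, b with
    | none, some ⟨_, j⟩ => j.val = 0
    | some ⟨i, j⟩, some ⟨i', j'⟩ => i = i' ∧ j.val + 1 = j'.val
    | _, _ => False)


section Aux

variable {G : SimpleGraph V}

lemma reachAvoid_symm {F : Set V} : Symmetric (reachAvoid G F) :=
  by
    haveI : Std.Symm (fun a b => G.Adj a b ∧ a ∉ F ∧ b ∉ F) :=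
      ⟨fun _ _ h => ⟨h.1.symm, h.2.2, h.2.1⟩⟩
    exact fun a b h => Std.Symm.symm (r := Relation.ReflTransGen _) a b h

lemma reachAvoid_mono {F F' : Set V} (h : F ⊆ F') {a b : V}
    (hr : reachAvoid G F' a b) : reachAvoid G F a b :=
  Relation.ReflTransGen.mono (r := fun a b => G.Adj a b ∧ a ∉ F' ∧ b ∉ F')
    (p := fun a b => G.Adj a b ∧ a ∉ F ∧ b ∉ F)
    (fun _ _ hxy => ⟨hxy.1, fun hx => hxy.2.1 (h hx), fun hy => hxy.2.2 (h hy)⟩) a b hr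

lemma psdForce_lift {F X : Set V} {u v : V} (hf : psdForce G F u v) (hv : v ∉ X) :
    psdForce G (F ∪ X) u v := by
  obtain ⟨h1, h2, h3, h4⟩ := hf
  exact ⟨Or.inl h1, fun h => h.elim h2 hv, h3, fun w hw hw' hr =>
    h4 w hw (fun h => hw' (Or.inl h)) (reachAvoid_mono Set.subset_union_left hr)⟩

lemma forceIn_lift {F X : Set V} {u v : V} (hf : forceIn G Set.univ F u v) (hv : v ∉ X) :
    forceIn G Set.univ (F ∪ X) u v := by
  obtain ⟨-, -, h3, h4, h5, h6⟩ := hf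
  exact ⟨trivial, trivial, Or.inl h3, fun h => h.elim h4 hv, h5,
    fun w hw ha hw' => h6 w hw ha fun h => hw' (Or.inl h)⟩

lemma psdShift {F N X : Set V} (h : Relation.ReflTransGen (psdStep G) F N) :
    Relation.ReflTransGen (psdStep G) (F ∪ X) (N ∪ X) := by
  induction h with
  | refl => exact .refl
  | tail _ hbc ih =>
    obtain ⟨u, v, hf, rfl⟩ := hbc
    by_cases hv : v ∈ X
    · rw [Set.insert_union]
      rwa [Set.insert_eq_self.mpr (Set.mem_union_right _ hv)]
    · exact ih.tail ⟨u, v, psdForce_lift hf hv, Set.insert_union⟩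

lemma zfShift {F N X : Set V} (h : Relation.ReflTransGen (zfStep G) F N) :
    Relation.ReflTransGen (zfStep G) (F ∪ X) (N ∪ X) := by
  induction h with
  | refl => exact .refl
  | tail _ hbc ih =>
    obtain ⟨u, v, hf, rfl⟩ := hbc
    by_cases hv : v ∈ X
    · rw [Set.insert_union]
      rwa [Set.insert_eq_self.mpr (Set.mem_union_right _ hv)]
    · exact ih.tail ⟨u, v, forceIn_lift hf hv, Set.insert_union⟩

lemma winMonoT {q : ℕ} {F : Set V} {t : ℕ} (h : ZqWinFrom G q F t) :
    ZqWinFrom G q F (t + 1) := by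
  induction h with
  | done t => exact .done _
  | rule1 v hv _ ih => exact .rule1 v hv ih
  | rule2 u v huv _ ih => exact .rule2 u v huv ih
  | rule3 𝒞 h𝒞 hcard next hnext _ ih => exact .rule3 𝒞 h𝒞 hcard next hnext ih

lemma winMonoQ {q q' : ℕ} (hq : q ≤ q') {F : Set V} {t : ℕ}
    (h : ZqWinFrom G q' F t) : ZqWinFrom G q F t := by
  induction h with
  | done t => exact .done t
  | rule1 v hv _ ih => exact .rule1 v hv ih
  | rule2 u v huv _ ih => exact .rule2 u v huv ih
  | rule3 𝒞 h𝒞 hcard next hnext _ ih =>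
    exact .rule3 𝒞 h𝒞 (le_trans (by omega) hcard) next hnext ih

lemma winFill [Fintype V] {q : ℕ} (S : Set V) :
    ∀ F t, ZqWinFrom G q (S ∪ F) t → ZqWinFrom G q F (t + S.ncard) := by
  refine Set.Finite.induction_on (motive := fun S _ => ∀ F t, ZqWinFrom G q (S ∪ F) t →
    ZqWinFrom G q F (t + S.ncard)) S (Set.toFinite S) ?_ ?_
  · intro F t h; simpa using h
  · intro a s ha hs ih F t h
    rw [Set.insert_union, ← Set.union_insert] at h
    have h2 := ih (insert a F) t h
    rw [Set.ncard_insert_of_notMem ha, ← Nat.add_assoc]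
    by_cases haF : a ∈ F
    · rw [Set.insert_eq_self.2 haF] at h2
      exact winMonoT h2
    · exact .rule1 a haF h2

lemma winAll [Fintype V] (q : ℕ) : ZqWinFrom G q ∅ (Fintype.card V) := by
  have := winFill (G := G) (q := q) Set.univ ∅ 0
    (by rw [Set.union_empty]; exact .done 0)
  simpa [Set.ncard_univ, Nat.card_eq_fintype_card] using this

lemma winOfZF {q : ℕ} {F : Set V}
    (h : Relation.ReflTransGen (zfStep G) F Set.univ) : ZqWinFrom G q F 0 := by
  induction h using Relation.ReflTransGen.head_induction_on with
  | refl => exact .done 0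
  | head hbc _ ih =>
    obtain ⟨u, v, hf, rfl⟩ := hbc
    exact .rule2 u v hf ih

lemma psdSim {F F' : Set V} {t : ℕ} (hs : psdStep G F F') (h : ZqWinFrom G 0 F' t) :
    ZqWinFrom G 0 F t := by
  obtain ⟨u, v, hf, rfl⟩ := hs
  obtain ⟨hu, hv, hadj, huniq⟩ := hf
  refine ZqWinFrom.rule3 {{w | reachAvoid G F v w}} ?_ ?_
    (fun _ _ _ => insert v F) ?_ (fun _ _ _ => h)
  · rintro x (rfl : x = _)
    exact ⟨v, hv, rfl⟩
  · simp [Set.ncard_singleton]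
  · intro 𝒮 h1 h2
    have h3 : 𝒮 = {{w | reachAvoid G F v w}} := by
      rcases Set.subset_singleton_iff_eq.1 h1 with h | h
      · exact absurd h (by simpa [h] using h2.ne_empty)
      · exact h
    subst h3
    rw [Set.sUnion_singleton]
    refine Relation.ReflTransGen.single ⟨u, v, ⟨Or.inl hu, Or.inr ?_, hu, hv, hadj, ?_⟩, rfl⟩
    · exact Relation.ReflTransGen.refl
    · rintro w (hwF | hwC) hadj' hw
      · exact absurd hwF hw
      · exact huniq w hadj' hw hwC

lemma winOfPSD {F : Set V}
    (h : Relation.ReflTransGen (psdStep G) F Set.univ) : ZqWinFrom G 0 F 0 := by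
  induction h using Relation.ReflTransGen.head_induction_on with
  | refl => exact .done 0
  | head hbc _ ih => exact psdSim hbc ih

lemma ncard_components_le [Fintype V] {F : Set V} {𝒞 : Set (Set V)}
    (h𝒞 : 𝒞 ⊆ unfilledComponents G F) : 𝒞.ncard ≤ Fintype.card V := by
  classical
  have hne : ∀ C ∈ 𝒞, C.Nonempty := by
    intro C hC
    obtain ⟨v, hv, rfl⟩ := h𝒞 hC
    exact ⟨v, Relation.ReflTransGen.refl⟩
  by_cases h0 : 𝒞 = ∅
  · simp [h0]
  obtain ⟨C₀, hC₀⟩ := Set.nonempty_iff_ne_empty.2 h0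
  obtain ⟨v₀, -⟩ := hne C₀ hC₀
  haveI : Nonempty V := ⟨v₀⟩
  set f : Set V → V := fun C => if h : C.Nonempty then h.some else Classical.arbitrary V
    with hfdef
  have hmem : ∀ C : Set V, C.Nonempty → f C ∈ C := by
    intro C h
    simp only [hfdef, dif_pos h]
    exact h.some_mem
  have hle : 𝒞.ncard ≤ (Set.univ : Set V).ncard := by
    refine Set.ncard_le_ncard_of_injOn f (fun C _ => trivial) ?_ Set.finite_univ
    intro C hC C' hC' hff
    obtain ⟨v, hv, rfl⟩ := h𝒞 hC
    obtain ⟨v', hv', rfl⟩ := h𝒞 hC'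
    have h1 : reachAvoid G F v (f {w | reachAvoid G F v w}) := hmem _ (hne _ hC)
    have h2 : reachAvoid G F v' (f {w | reachAvoid G F v' w}) := hmem _ (hne _ hC')
    rw [hff] at h1
    have hvv' : reachAvoid G F v' v := h2.trans (reachAvoid_symm h1)
    ext x
    simp only [Set.mem_setOf_eq]
    exact ⟨fun hx => hvv'.trans hx, fun hx => (reachAvoid_symm hvv').trans hx⟩
  simpa [Set.ncard_univ, Nat.card_eq_fintype_card] using hle

lemma rule3Reach_subset {A a b : Set V}
    (h : Relation.ReflTransGen (rule3Step G A) a b) : a ⊆ b := by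
  induction h with
  | refl => exact subset_rfl
  | tail _ hbc ih =>
    obtain ⟨u, v, _, rfl⟩ := hbc
    exact ih.trans (Set.subset_insert _ _)

lemma rule3ToPsd {F : Set V} {𝒞 : Set (Set V)} (h𝒞 : 𝒞 ⊆ unfilledComponents G F)
    {N : Set V} (h : Relation.ReflTransGen (rule3Step G (F ∪ ⋃₀ 𝒞)) F N) :
    Relation.ReflTransGen (psdStep G) F N := by
  induction h with
  | refl => exact .refl
  | tail hFb hbc ih =>
    have hFsub : F ⊆ _ := rule3Reach_subset hFb
    obtain ⟨u, v, hf, rfl⟩ := hbc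
    obtain ⟨huA, hvA, hub, hvb, hadj, huniq⟩ := hf
    refine ih.tail ⟨u, v, ⟨hub, hvb, hadj, ?_⟩, rfl⟩
    intro w hadj' hwb hreach
    have hvC : v ∈ ⋃₀ 𝒞 := hvA.resolve_left fun hvF => hvb (hFsub hvF)
    obtain ⟨C, hC𝒞, hvC⟩ := hvC
    obtain ⟨v₀, hv₀, rfl⟩ := h𝒞 hC𝒞
    have hwF : reachAvoid G F v w := reachAvoid_mono hFsub hreach
    exact huniq w (Or.inr ⟨_, hC𝒞, hvC.trans hwF⟩) hadj' hwb

lemma extractZF [Fintype V] {F : Set V} {t : ℕ}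
    (h : ZqWinFrom G (Fintype.card V) F t) :
    ∃ X : Set V, X.ncard ≤ t ∧
      Relation.ReflTransGen (zfStep G) (F ∪ X) Set.univ := by
  induction h with
  | done t => exact ⟨∅, by simp, by simpa using Relation.ReflTransGen.refl⟩
  | rule1 v hv h ih =>
    obtain ⟨X, hX, hreach⟩ := ih
    refine ⟨insert v X, le_trans (Set.ncard_insert_le _ _) (by omega), ?_⟩
    rwa [Set.union_insert, ← Set.insert_union]
  | rule2 u v huv h ih =>
    obtain ⟨X, hX, hreach⟩ := ih
    have step : Relation.ReflTransGen (zfStep G) _ _ :=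
      Relation.ReflTransGen.single ⟨u, v, huv, rfl⟩
    exact ⟨X, hX, (zfShift step).trans hreach⟩
  | rule3 𝒞 h𝒞 hcard next hnext h ih =>
    exact absurd (le_trans hcard (ncard_components_le h𝒞)) (by omega)

lemma extractPSD [Fintype V] {F : Set V} {t : ℕ} (h : ZqWinFrom G 0 F t) :
    ∃ X : Set V, X.ncard ≤ t ∧
      Relation.ReflTransGen (psdStep G) (F ∪ X) Set.univ := by
  induction h with
  | done t => exact ⟨∅, by simp, by simpa using Relation.ReflTransGen.refl⟩
  | rule1 v hv h ih =>
    obtain ⟨X, hX, hreach⟩ := ih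
    refine ⟨insert v X, le_trans (Set.ncard_insert_le _ _) (by omega), ?_⟩
    rwa [Set.union_insert, ← Set.insert_union]
  | rule2 u v huv h ih =>
    obtain ⟨X, hX, hreach⟩ := ih
    have step : Relation.ReflTransGen (psdStep G) _ _ :=
      Relation.ReflTransGen.single ⟨u, v,
        ⟨huv.2.2.1, huv.2.2.2.1, huv.2.2.2.2.1,
          fun w hadj hnf _ => huv.2.2.2.2.2 w trivial hadj hnf⟩, rfl⟩
    exact ⟨X, hX, (psdShift step).trans hreach⟩
  | rule3 𝒞 h𝒞 hcard next hnext h ih =>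
    have h2 : 𝒞.Nonempty := Set.nonempty_of_ncard_ne_zero (by omega)
    obtain ⟨X, hX, hreach⟩ := ih 𝒞 subset_rfl h2
    have hpsd := rule3ToPsd h𝒞 (hnext 𝒞 subset_rfl h2)
    exact ⟨X, hX, (psdShift hpsd).trans hreach⟩

end Aux

/-- For every finite simple graph `G` on `n` vertices and all integers
`0 ≤ q ≤ q' ≤ n`: `Z₊(G) = Z₀(G)`, `Z_q(G) ≤ Z_{q'}(G)` and `Z_n(G) = Z(G)`. -/
theorem stmt0 {V : Type*} [Fintype V] (G : SimpleGraph V) (q q' : ℕ)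
    (hqq' : q ≤ q') (hq'n : q' ≤ Fintype.card V) :
    psdZeroForcingNumber G = qZeroForcingNumber G 0 ∧
    qZeroForcingNumber G q ≤ qZeroForcingNumber G q' ∧
    qZeroForcingNumber G (Fintype.card V) = zeroForcingNumber G := by
  classical
  refine ⟨?_, ?_, ?_⟩
  · apply le_antisymm
    · have hmem : ZqWinFrom G 0 ∅ (qZeroForcingNumber G 0) :=
        Nat.sInf_mem ⟨_, winAll 0⟩
      obtain ⟨X, hX, hreach⟩ := extractPSD hmem
      rw [Set.empty_union] at hreach
      exact le_trans (Nat.sInf_le ⟨X, rfl, hreach⟩) hX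
    · have hne : {n | ∃ S : Set V, S.ncard = n ∧ IsPSDForcingSet G S}.Nonempty :=
        ⟨_, Set.univ, rfl, Relation.ReflTransGen.refl⟩
      obtain ⟨S, hS, hSpsd⟩ := Nat.sInf_mem hne
      have h1 : ZqWinFrom G 0 ∅ (0 + S.ncard) :=
        winFill S ∅ 0 (by rw [Set.union_empty]; exact winOfPSD hSpsd)
      have h2 : ZqWinFrom G 0 ∅ (psdZeroForcingNumber G) := by
        have he : psdZeroForcingNumber G = S.ncard := by
          rw [psdZeroForcingNumber, ← hS]
        rw [he]
        simpa using h1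
      exact Nat.sInf_le h2
  · have hmem : ZqWinFrom G q' ∅ (qZeroForcingNumber G q') :=
      Nat.sInf_mem ⟨_, winAll q'⟩
    exact Nat.sInf_le (winMonoQ hqq' hmem)
  · apply le_antisymm
    · have hne : {n | ∃ S : Set V, S.ncard = n ∧ IsZeroForcingSet G S}.Nonempty :=
        ⟨_, Set.univ, rfl, Relation.ReflTransGen.refl⟩
      obtain ⟨S, hS, hSzf⟩ := Nat.sInf_mem hne
      have h1 : ZqWinFrom G (Fintype.card V) ∅ (0 + S.ncard) :=
        winFill S ∅ 0 (by rw [Set.union_empty]; exact winOfZF hSzf)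
      have h2 : ZqWinFrom G (Fintype.card V) ∅ (zeroForcingNumber G) := by
        have he : zeroForcingNumber G = S.ncard := by
          rw [zeroForcingNumber, ← hS]
        rw [he]
        simpa using h1
      exact Nat.sInf_le h2
    · have hmem : ZqWinFrom G (Fintype.card V) ∅
          (qZeroForcingNumber G (Fintype.card V)) :=
        Nat.sInf_mem ⟨_, winAll _⟩
      obtain ⟨X, hX, hreach⟩ := extractZF hmem
      rw [Set.empty_union] at hreach
      exact le_trans (Nat.sInf_le ⟨X, rfl, hreach⟩) hX

end ZqForcing
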